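/- arXiv:1804.04972 — 3 statements merged into one kernel-verified Lean document; each statement's English description precedes it below -/
import Mathlib

section
/- The power series Ψ_q is p-adically entire: writing Ψ_q(T) = Σ_{i≥1} a_i T^i with a_i ∈ ℤ, one has limsup_{i→∞} |a_i|_p^{1/i} = 0; equivalently v_p(a_i)/i → +∞. -/
open PowerSeries Filter

/-- `Ψ ∈ T + T²ℤ[[T]]` satisfies `∑_{j≥0} p^{-j} Ψ(p^j T)^{q^j} = T` (coefficientwise). -/
def IsPsi (p q : ℕ) (Ψ : PowerSeries ℤ) : Prop :=
  PowerSeries.constantCoeff (R := ℤ) Ψ = 0 ∧ PowerSeries.coeff (R := ℤ) 1 Ψ = 1 ∧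
  ∀ n : ℕ,
    (∑ j ∈ Finset.range (n + 1),
      ((p : ℚ) ^ j)⁻¹ *
        PowerSeries.coeff (R := ℚ) n
          ((PowerSeries.rescale ((p : ℚ) ^ j) (Ψ.map (Int.castRingHom ℚ))) ^ (q ^ j)))
      = PowerSeries.coeff (R := ℚ) n (PowerSeries.X : PowerSeries ℚ)

lemma myCoeff_pow_eq_zero {φ : PowerSeries ℤ} (h : constantCoeff (R := ℤ) φ = 0) :
    ∀ k n : ℕ, n < k → coeff (R := ℤ) n (φ ^ k) = 0 := by
  intro k
  induction k with
  | zero => omega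
  | succ k ih =>
    intro n hn
    rw [pow_succ, coeff_mul]
    apply Finset.sum_eq_zero
    rintro ⟨i, l⟩ hil
    rw [Finset.HasAntidiagonal.mem_antidiagonal] at hil
    rcases Nat.eq_zero_or_pos l with hl | hl
    · subst hl
      have : coeff (R := ℤ) 0 φ = 0 := by rw [coeff_zero_eq_constantCoeff]; exact h
      rw [this, mul_zero]
    · rw [ih i (by omega), zero_mul]

lemma myDvd_coeff_pow {p c D : ℕ} {φ : PowerSeries ℤ}
    (h0 : constantCoeff (R := ℤ) φ = 0)
    (h : ∀ m, (p : ℤ) ^ (c * m - D) ∣ coeff (R := ℤ) m φ) :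
    ∀ k n, (p : ℤ) ^ (c * n - D * k) ∣ coeff (R := ℤ) n (φ ^ k) := by
  intro k
  induction k with
  | zero =>
    intro n
    rcases Nat.eq_zero_or_pos n with hn | hn
    · subst hn; simp
    · simp [coeff_one, Nat.pos_iff_ne_zero.mp hn]
  | succ k ih =>
    intro n
    rw [pow_succ, coeff_mul]
    apply Finset.dvd_sum
    rintro ⟨i, l⟩ hil
    rw [Finset.HasAntidiagonal.mem_antidiagonal] at hil
    rcases Nat.eq_zero_or_pos l with hl | hl
    · subst hl
      have : coeff (R := ℤ) 0 φ = 0 := by rw [coeff_zero_eq_constantCoeff]; exact h0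
      rw [this, mul_zero]; exact dvd_zero _
    · have h1 := ih i
      have h2 := h l
      have hle : c * n - D * (k + 1) ≤ (c * i - D * k) + (c * l - D) := by
        subst hil
        dsimp only
        have e1 : c * (i + l) = c * i + c * l := Nat.mul_add c i l
        have e2 : D * (k + 1) = D * k + D := Nat.mul_add D k 1 |>.trans (by ring)
        omega
      exact (pow_dvd_pow _ hle).trans
        ((pow_add (p:ℤ) _ _) ▸ mul_dvd_mul h1 h2)

lemma myRecursion (p q : ℕ) (hp : 0 < p) (Ψ : PowerSeries ℤ) (hΨ : IsPsi p q Ψ)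
    (n : ℕ) (hn : 2 ≤ n) :
    (∑ j ∈ Finset.range (n + 1), (p : ℤ) ^ (j * (n - 1)) * coeff (R := ℤ) n (Ψ ^ q ^ j)) = 0 := by
  have h := hΨ.2.2 n
  rw [coeff_X, if_neg (by omega)] at h
  have hp0 : (p : ℚ) ≠ 0 := Nat.cast_ne_zero.mpr (by omega)
  have key : ∀ j : ℕ,
      ((p : ℚ) ^ j)⁻¹ * coeff (R := ℚ) n
        ((rescale ((p : ℚ) ^ j) (Ψ.map (Int.castRingHom ℚ))) ^ (q ^ j))
      = (((p : ℤ) ^ (j * (n - 1)) * coeff (R := ℤ) n (Ψ ^ q ^ j) : ℤ) : ℚ) := by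
    intro j
    rw [← map_pow (rescale ((p:ℚ)^j)), coeff_rescale, ← map_pow (PowerSeries.map (Int.castRingHom ℚ)),
      coeff_map]
    simp only [eq_intCast]
    push_cast
    rw [← pow_mul]
    have hn' : j * n = j * (n - 1) + j := by
      have h1 : n = (n - 1) + 1 := by omega
      calc j * n = j * ((n - 1) + 1) := by rw [← h1]
        _ = j * (n - 1) + j := by ring
    rw [hn', pow_add]
    field_simp
  rw [Finset.sum_congr rfl (fun j _ => key j), ← Int.cast_sum] at h
  exact_mod_cast h

lemma myAux (q D j n : ℕ) (hq : 2 ≤ q) (hj : 1 ≤ j) (hn : 2 ≤ n) (hQ : q ^ j ≤ n) :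
    n + D * q ^ j ≤ j * (n - 1) + (D * q + q ^ D * (D + 1) + 2 * D + 2) := by
  obtain ⟨j', rfl⟩ : ∃ j'', j = j'' + 1 := ⟨j - 1, by omega⟩
  rcases Nat.eq_zero_or_pos j' with h1 | h1
  · subst h1
    simp only [zero_add, pow_one, one_mul] at *
    omega
  · have hj2 : 2 ≤ j' + 1 := by omega
    rcases le_or_gt (j' + 1) D with h2 | h2
    · have e1 : q ^ (j' + 1) ≤ q ^ D := Nat.pow_le_pow_right (by omega) h2
      have e2 : n ≤ (j' + 1) * (n - 1) := by
        calc n ≤ 2 * (n - 1) := by omega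
          _ ≤ (j' + 1) * (n - 1) := Nat.mul_le_mul_right _ hj2
      have e3 : D * q ^ (j' + 1) ≤ q ^ D * (D + 1) := by
        calc D * q ^ (j' + 1) ≤ D * q ^ D := Nat.mul_le_mul_left _ e1
          _ ≤ q ^ D * (D + 1) := by rw [mul_comm]; exact Nat.mul_le_mul_left _ (by omega)
      omega
    · have e0 : 1 ≤ q ^ (j' + 1) := Nat.one_le_pow _ _ (by omega)
      have e1 : D * q ^ (j' + 1) - D ≤ j' * (q ^ (j' + 1) - 1) := by
        have := Nat.mul_le_mul_right (q ^ (j' + 1) - 1) (show D ≤ j' by omega)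
        have hd : D * (q ^ (j' + 1) - 1) = D * q ^ (j' + 1) - D := by
          rw [Nat.mul_sub, mul_one]
        omega
      have e2 : j' * (q ^ (j' + 1) - 1) ≤ j' * (n - 1) := Nat.mul_le_mul_left _ (by omega)
      have e3 : (j' + 1) * (n - 1) = (n - 1) + j' * (n - 1) := by ring
      omega

lemma myKey (p q : ℕ) (hp : 2 ≤ p) (hq : 2 ≤ q) (Ψ : PowerSeries ℤ) (hΨ : IsPsi p q Ψ) :
    ∀ c : ℕ, ∃ D : ℕ, ∀ n, (p : ℤ) ^ (c * n - D) ∣ coeff (R := ℤ) n Ψ := by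
  intro c
  induction c with
  | zero => exact ⟨0, fun n => by simp⟩
  | succ c ih =>
    obtain ⟨D, hD⟩ := ih
    refine ⟨(D * q + q ^ D * (D + 1) + 2 * D + 2) + c + 1, fun n => ?_⟩
    set D'' : ℕ := D * q + q ^ D * (D + 1) + 2 * D + 2 with hD''
    rcases Nat.lt_or_ge n 2 with hn | hn
    · interval_cases n
      · have : coeff (R := ℤ) 0 Ψ = 0 := by rw [coeff_zero_eq_constantCoeff]; exact hΨ.1
        rw [this]; exact dvd_zero _
      · have : (c + 1) * 1 - (D'' + c + 1) = 0 := by omega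
        rw [this, pow_zero]; exact one_dvd _
    · have hrec := myRecursion p q (by omega) Ψ hΨ n hn
      rw [Finset.sum_range_succ'] at hrec
      simp only [zero_mul, pow_zero, one_mul] at hrec
      rw [pow_one] at hrec
      have heq : coeff (R := ℤ) n Ψ =
          -∑ j ∈ Finset.range n, (p : ℤ) ^ ((j + 1) * (n - 1)) * coeff (R := ℤ) n (Ψ ^ q ^ (j + 1)) := by
        omega
      rw [heq, dvd_neg]
      apply Finset.dvd_sum
      intro j _
      rcases le_or_gt (q ^ (j + 1)) n with hQ | hQ
      · have hd := myDvd_coeff_pow hΨ.1 hD (q ^ (j + 1)) n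
        have hle : (c + 1) * n - (D'' + c + 1) ≤
            (j + 1) * (n - 1) + (c * n - D * q ^ (j + 1)) := by
          have haux := myAux q D (j + 1) n hq (by omega) hn hQ
          have e1 : (c + 1) * n = c * n + n := by ring
          omega
        refine (pow_dvd_pow _ hle).trans ?_
        rw [pow_add]
        exact mul_dvd_mul_left _ hd
      · rw [myCoeff_pow_eq_zero hΨ.1 (q ^ (j + 1)) n hQ, mul_zero]
        exact dvd_zero _

/-- `Ψ_q` is `p`-adically entire: writing `Ψ_q = ∑ a_i T^i` with `a_i ∈ ℤ`,
`limsup |a_i|_p^{1/i} = 0`, i.e. (the terms being nonnegative) `|a_i|_p^{1/i} → 0`;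
equivalently `v_p(a_i)/i → +∞`. -/
theorem psi_entire (p f : ℕ) (hp : Fact p.Prime) (hf : 0 < f) (q : ℕ) (hq : q = p ^ f)
    (Ψ : PowerSeries ℤ) (hΨ : IsPsi p q Ψ) :
    Tendsto (fun i : ℕ => ‖((PowerSeries.coeff (R := ℤ) i Ψ : ℤ) : ℚ_[p])‖ ^ (1 / (i : ℝ)))
      atTop (nhds 0) := by
  have hp2 : 2 ≤ p := hp.out.two_le
  have hq2 : 2 ≤ q := by
    subst hq; exact Nat.one_lt_pow hf.ne' hp.out.one_lt
  have hpR : (1 : ℝ) < p := by exact_mod_cast hp2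
  have key := myKey p q hp2 hq2 Ψ hΨ
  rw [Metric.tendsto_atTop]
  intro ε hε
  obtain ⟨m, hm⟩ := exists_pow_lt_of_lt_one hε
    (show (p : ℝ)⁻¹ < 1 by rw [inv_lt_one_iff₀]; right; exact hpR)
  obtain ⟨D, hD⟩ := key (m + 1)
  refine ⟨max D 1, fun n hn => ?_⟩
  have hn1 : 1 ≤ n := le_trans (le_max_right _ _) hn
  have hnD : D ≤ n := le_trans (le_max_left _ _) hn
  have h0 : (0 : ℝ) ≤ ‖((PowerSeries.coeff (R := ℤ) n Ψ : ℤ) : ℚ_[p])‖ := norm_nonneg _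
  rw [dist_zero_right, Real.norm_eq_abs, abs_of_nonneg (Real.rpow_nonneg h0 _)]
  set e : ℕ := (m + 1) * n - D with he
  have hnorm : ‖((PowerSeries.coeff (R := ℤ) n Ψ : ℤ) : ℚ_[p])‖ ≤ (p : ℝ) ^ (-(e : ℤ)) :=
    (Padic.norm_int_le_pow_iff_dvd _ _).mpr (hD n)
  have hmn : m * n ≤ e := by
    have e1 : (m + 1) * n = m * n + n := by ring
    omega
  calc ‖((PowerSeries.coeff (R := ℤ) n Ψ : ℤ) : ℚ_[p])‖ ^ (1 / (n : ℝ))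
      ≤ ((p : ℝ) ^ (-(e : ℤ))) ^ (1 / (n : ℝ)) := by
        apply Real.rpow_le_rpow h0 hnorm (by positivity)
    _ ≤ (p : ℝ)⁻¹ ^ m := by
        have h1 : ((p : ℝ) ^ (-(e : ℤ))) ^ (1 / (n : ℝ))
            = (p : ℝ) ^ (((-(e : ℤ) : ℤ) : ℝ) * (1 / (n : ℝ))) := by
          rw [← Real.rpow_intCast (p : ℝ) (-(e : ℤ)), ← Real.rpow_mul (by positivity)]
        have h2 : (p : ℝ)⁻¹ ^ m = (p : ℝ) ^ (-(m : ℝ)) := by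
          rw [Real.rpow_neg (by positivity), Real.rpow_natCast, inv_pow]
        rw [h1, h2]
        apply (Real.rpow_le_rpow_left_iff hpR).mpr
        rw [mul_one_div, div_le_iff₀ (by positivity : (0 : ℝ) < (n : ℝ))]
        have hcast : (m : ℝ) * n ≤ (e : ℝ) := by exact_mod_cast hmn
        push_cast
        nlinarith
    _ < ε := hm
end

section
/- For every a ∈ ℚ_q, the value Ψ_q(a) lies in ℤ_q. -/
open PowerSeries

namespace PsiAux


lemma coeff_pow_eq_zero {Ψ : PowerSeries ℤ} (hc0 : PowerSeries.constantCoeff (R := ℤ) Ψ = 0) :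
    ∀ N, 1 ≤ N → ∀ n, n < N → PowerSeries.coeff (R := ℤ) n (Ψ ^ N) = 0 := by
  intro N
  induction N with
  | zero => omega
  | succ N ih =>
    intro _ n hn
    rcases Nat.eq_zero_or_pos N with rfl | hN
    · interval_cases n
      simpa [PowerSeries.coeff_zero_eq_constantCoeff] using hc0
    · rw [pow_succ, PowerSeries.coeff_mul]
      apply Finset.sum_eq_zero
      rintro ⟨i, j⟩ hij
      rw [Finset.HasAntidiagonal.mem_antidiagonal] at hij
      rcases lt_or_ge i N with hi | hi
      · rw [ih hN i hi, zero_mul]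
      · have hj : j = 0 := by omega
        subst hj
        have : PowerSeries.coeff (R := ℤ) 0 Ψ = 0 := by
          simpa [PowerSeries.coeff_zero_eq_constantCoeff] using hc0
        rw [this, mul_zero]

lemma key_identity {p q : ℕ} {Ψ : PowerSeries ℤ} (hp2 : 2 ≤ p) (hΨ : IsPsi p q Ψ) :
    ∀ n, 1 ≤ n →
      (∑ j ∈ Finset.range (n + 1), (p : ℤ) ^ (j * (n - 1)) * PowerSeries.coeff (R := ℤ) n (Ψ ^ q ^ j))
        = if n = 1 then 1 else 0 := by
  intro n hn
  have hpQ : (p : ℚ) ≠ 0 := by positivity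
  have h := hΨ.2.2 n
  have hterm : ∀ j : ℕ,
      ((p : ℚ) ^ j)⁻¹ *
        PowerSeries.coeff (R := ℚ) n ((PowerSeries.rescale ((p : ℚ) ^ j) (Ψ.map (Int.castRingHom ℚ))) ^ (q ^ j))
      = (((p : ℤ) ^ (j * (n - 1)) * PowerSeries.coeff (R := ℤ) n (Ψ ^ q ^ j) : ℤ) : ℚ) := by
    intro j
    rw [← map_pow (PowerSeries.rescale ((p : ℚ) ^ j)), PowerSeries.coeff_rescale]
    rw [← map_pow (PowerSeries.map (Int.castRingHom ℚ)), PowerSeries.coeff_map]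
    have hpow : ((p : ℚ) ^ j) ^ n = (p : ℚ) ^ (j * (n - 1)) * (p : ℚ) ^ j := by
      rw [← pow_mul, ← pow_add]
      congr 1
      cases n with
      | zero => omega
      | succ n => simp [Nat.succ_sub_one]; ring
    rw [hpow]
    have hne : ((p : ℚ) ^ j) ≠ 0 := pow_ne_zero _ hpQ
    rw [eq_intCast]
    push_cast
    field_simp
  rw [Finset.sum_congr rfl fun j _ => hterm j] at h
  rw [PowerSeries.coeff_X] at h
  exact_mod_cast h

def Ebound (q : ℕ) : ℕ → ℕ
  | 0 => 0
  | t + 1 => q ^ (2 * t + 1) * Ebound q t + 1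

lemma Ebound_ge (q : ℕ) (hq : 2 ≤ q) : ∀ t, t ≤ Ebound q t := by
  intro t
  induction t with
  | zero => simp [Ebound]
  | succ t ih =>
    have h1 : 2 ≤ q ^ (2 * t + 1) := by
      calc 2 = 2 ^ 1 := rfl
      _ ≤ 2 ^ (2 * t + 1) := Nat.pow_le_pow_right (by norm_num) (by omega)
      _ ≤ q ^ (2 * t + 1) := Nat.pow_le_pow_left hq _
    have : 2 * Ebound q t + 1 ≤ Ebound q (t + 1) := by
      show 2 * Ebound q t + 1 ≤ q ^ (2 * t + 1) * Ebound q t + 1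
      have := Nat.mul_le_mul_right (Ebound q t) h1
      omega
    rcases Nat.eq_zero_or_pos t with rfl | ht
    · simp [Ebound]
    · have : t ≤ Ebound q t := ih
      omega

lemma toNat_max_add (a b c d : ℤ) :
    ((a + c) ⊔ (b + d)).toNat ≤ (a ⊔ b).toNat + (c ⊔ d).toNat := by
  rw [max_def, max_def, max_def]
  split_ifs <;> omega

lemma coeff_pow_dvd {p : ℕ} {Ψ : PowerSeries ℤ}
    (hc0 : PowerSeries.constantCoeff (R := ℤ) Ψ = 0) (t Ev : ℕ) :
    ∀ N, 1 ≤ N → ∀ n : ℕ,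
      (∀ m : ℕ, m + N ≤ n + 1 →
        (p : ℤ) ^ (((t : ℤ) * m - Ev) ⊔ ((m : ℤ) - 1)).toNat ∣ PowerSeries.coeff (R := ℤ) m Ψ) →
      (p : ℤ) ^ (((t : ℤ) * n - (N : ℤ) * Ev) ⊔ ((n : ℤ) - N)).toNat ∣
        PowerSeries.coeff (R := ℤ) n (Ψ ^ N) := by
  intro N
  induction N with
  | zero => omega
  | succ N ih =>
    intro _ n hyp
    rcases Nat.eq_zero_or_pos N with rfl | hN
    · simpa using hyp n (by omega)
    · rw [pow_succ, PowerSeries.coeff_mul]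
      apply Finset.dvd_sum
      rintro ⟨i, j⟩ hij
      rw [Finset.HasAntidiagonal.mem_antidiagonal] at hij
      rcases lt_or_ge i N with hi | hi
      · rw [coeff_pow_eq_zero hc0 N hN i hi, zero_mul]
        exact dvd_zero _
      rcases Nat.eq_zero_or_pos j with rfl | hj
      · have : PowerSeries.coeff (R := ℤ) 0 Ψ = 0 := by
          simpa [PowerSeries.coeff_zero_eq_constantCoeff] using hc0
        rw [this, mul_zero]
        exact dvd_zero _
      -- main case
      have h1 : (p : ℤ) ^ (((t : ℤ) * i - (N : ℤ) * Ev) ⊔ ((i : ℤ) - N)).toNat ∣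
          PowerSeries.coeff (R := ℤ) i (Ψ ^ N) := by
        apply ih hN
        intro m hm
        exact hyp m (by omega)
      have h2 : (p : ℤ) ^ (((t : ℤ) * j - Ev) ⊔ ((j : ℤ) - 1)).toNat ∣
          PowerSeries.coeff (R := ℤ) j Ψ := hyp j (by omega)
      have hexp : (((t : ℤ) * n - ((N : ℤ) + 1) * Ev) ⊔ ((n : ℤ) - (N + 1))).toNat ≤
          (((t : ℤ) * i - (N : ℤ) * Ev) ⊔ ((i : ℤ) - N)).toNat +
          (((t : ℤ) * j - Ev) ⊔ ((j : ℤ) - 1)).toNat := by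
        have hn' : (i : ℤ) + j = n := by exact_mod_cast hij
        have e1 : (t : ℤ) * n - ((N : ℤ) + 1) * Ev
            = ((t : ℤ) * i - (N : ℤ) * Ev) + ((t : ℤ) * j - Ev) := by
          rw [← hn']; ring
        have e2 : (n : ℤ) - (N + 1) = ((i : ℤ) - N) + ((j : ℤ) - 1) := by
          rw [← hn']; ring
        rw [e1, e2]
        exact toNat_max_add _ _ _ _
      calc (p : ℤ) ^ (((t : ℤ) * n - ((N : ℤ) + 1) * Ev) ⊔ ((n : ℤ) - (N + 1))).toNat
          ∣ (p : ℤ) ^ ((((t : ℤ) * i - (N : ℤ) * Ev) ⊔ ((i : ℤ) - N)).toNat +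
              (((t : ℤ) * j - Ev) ⊔ ((j : ℤ) - 1)).toNat) := pow_dvd_pow _ hexp
        _ = (p : ℤ) ^ (((t : ℤ) * i - (N : ℤ) * Ev) ⊔ ((i : ℤ) - N)).toNat *
              (p : ℤ) ^ (((t : ℤ) * j - Ev) ⊔ ((j : ℤ) - 1)).toNat := pow_add _ _ _
        _ ∣ _ := mul_dvd_mul h1 h2


lemma Ebound_def0 (q : ℕ) : Ebound q 0 = 0 := rfl
lemma Ebound_def1 (q t : ℕ) : Ebound q (t+1) = q ^ (2 * t + 1) * Ebound q t + 1 := rfl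

theorem coeff_dvd {p q : ℕ} {Ψ : PowerSeries ℤ} (hp2 : 2 ≤ p) (hq2 : 2 ≤ q)
    (hc0 : PowerSeries.constantCoeff (R := ℤ) Ψ = 0)
    (hkey : ∀ n, 1 ≤ n →
      (∑ j ∈ Finset.range (n + 1), (p : ℤ) ^ (j * (n - 1)) * PowerSeries.coeff (R := ℤ) n (Ψ ^ q ^ j))
        = if n = 1 then 1 else 0) :
    ∀ t n : ℕ, (p : ℤ) ^ (((t : ℤ) * n - Ebound q t) ⊔ ((n : ℤ) - 1)).toNat ∣
      PowerSeries.coeff (R := ℤ) n Ψ := by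
  intro t
  induction t with
  | zero =>
    intro n
    rcases Nat.eq_zero_or_pos n with rfl | hn
    · have hz : PowerSeries.coeff (R := ℤ) 0 Ψ = 0 := by
        simpa [PowerSeries.coeff_zero_eq_constantCoeff] using hc0
      rw [hz]; exact dvd_zero _
    rcases eq_or_lt_of_le (Nat.succ_le_of_lt hn) with h1 | hn2
    · -- n = 1
      have : (((0:ℕ) : ℤ) * (n:ℤ) - (Ebound q 0 : ℤ)) ⊔ ((n : ℤ) - 1) = 0 := by
        rw [Ebound_def0, ← h1]; simp
      rw [this]
      simp
    · -- n ≥ 2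
      have hrec := hkey n hn
      rw [Finset.sum_range_succ'] at hrec
      have h0 : (p : ℤ) ^ (0 * (n - 1)) * PowerSeries.coeff (R := ℤ) n (Ψ ^ q ^ 0) =
          PowerSeries.coeff (R := ℤ) n Ψ := by simp
      rw [h0, if_neg (by omega)] at hrec
      have hcn : PowerSeries.coeff (R := ℤ) n Ψ =
          -∑ i ∈ Finset.range n, (p : ℤ) ^ ((i+1) * (n - 1)) * PowerSeries.coeff (R := ℤ) n (Ψ ^ q ^ (i+1)) := by
        linarith [hrec]
      rw [hcn]
      apply Dvd.dvd.neg_right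
      apply Finset.dvd_sum
      intro i _
      have hexp : (((0:ℕ) : ℤ) * (n:ℤ) - (Ebound q 0 : ℤ)) ⊔ ((n : ℤ) - 1) = (n : ℤ) - 1 := by
        rw [Ebound_def0]
        simp only [Nat.cast_zero, zero_mul, zero_sub, Int.ofNat_zero, neg_zero]
        rw [max_eq_right (by omega)]
      rw [hexp]
      have h1 : (((n:ℤ) - 1).toNat) ≤ (i+1) * (n-1) := by
        have : n - 1 ≤ (i+1) * (n-1) := Nat.le_mul_of_pos_left _ (by omega)
        omega
      exact Dvd.dvd.mul_right (pow_dvd_pow _ h1) _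
  | succ t ih =>
    intro n
    rcases Nat.eq_zero_or_pos n with rfl | hn
    · have hz : PowerSeries.coeff (R := ℤ) 0 Ψ = 0 := by
        simpa [PowerSeries.coeff_zero_eq_constantCoeff] using hc0
      rw [hz]; exact dvd_zero _
    rcases eq_or_lt_of_le (Nat.succ_le_of_lt hn) with h1 | hn2
    · -- n = 1 : exponent is 0
      have hE : (t+1 : ℕ) ≤ Ebound q (t+1) := Ebound_ge q hq2 (t+1)
      have : ((((t+1):ℕ) : ℤ) * (n:ℤ) - (Ebound q (t+1) : ℤ)) ⊔ ((n : ℤ) - 1) = 0 := by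
        rw [← h1]
        push_cast
        have : ((t:ℤ)+1) * 1 - (Ebound q (t+1) : ℤ) ≤ 0 := by
          have : ((t:ℤ)+1) ≤ (Ebound q (t+1) : ℤ) := by exact_mod_cast hE
          linarith
        rw [max_eq_right] <;> simp_all
      rw [this]
      simp
    · -- n ≥ 2
      have hrec := hkey n hn
      rw [Finset.sum_range_succ'] at hrec
      have h0 : (p : ℤ) ^ (0 * (n - 1)) * PowerSeries.coeff (R := ℤ) n (Ψ ^ q ^ 0) =
          PowerSeries.coeff (R := ℤ) n Ψ := by simp
      rw [h0, if_neg (by omega)] at hrec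
      have hcn : PowerSeries.coeff (R := ℤ) n Ψ =
          -∑ i ∈ Finset.range n, (p : ℤ) ^ ((i+1) * (n - 1)) * PowerSeries.coeff (R := ℤ) n (Ψ ^ q ^ (i+1)) := by
        linarith [hrec]
      rw [hcn]
      apply Dvd.dvd.neg_right
      apply Finset.dvd_sum
      intro i _
      obtain ⟨j, hj⟩ : ∃ j, j = i + 1 := ⟨_, rfl⟩
      rw [← hj]
      set X := ((((t+1):ℕ) : ℤ) * (n:ℤ) - (Ebound q (t+1) : ℤ)) ⊔ ((n : ℤ) - 1) with hX
      rcases lt_or_ge n (q ^ j) with hsmall | hbig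
      · rw [coeff_pow_eq_zero hc0 (q ^ j) (Nat.one_le_pow _ _ (by omega)) n hsmall, mul_zero]
        exact dvd_zero _
      · -- q^j ≤ n
        have hA : (p : ℤ) ^ (((t : ℤ) * n - ((q^j : ℕ) : ℤ) * (Ebound q t)) ⊔ ((n : ℤ) - (q^j : ℕ))).toNat ∣
            PowerSeries.coeff (R := ℤ) n (Ψ ^ q ^ j) := by
          apply coeff_pow_dvd hc0 t (Ebound q t) (q ^ j) (Nat.one_le_pow _ _ (by omega)) n
          intro m _
          exact ih m
        set e1 := (((t : ℤ) * n - ((q^j : ℕ) : ℤ) * (Ebound q t)) ⊔ ((n : ℤ) - (q^j : ℕ))).toNat with he1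
        have hexp : X.toNat ≤ j * (n - 1) + e1 := by
          rw [Int.toNat_le]
          have hcast : ((j * (n-1) + e1 : ℕ) : ℤ) = (j : ℤ) * ((n:ℤ) - 1) + (e1 : ℤ) := by
            push_cast [Nat.cast_sub (by omega : 1 ≤ n)]
            ring
          rw [hcast, hX]
          apply sup_le
          · -- branch (t+1)*n - E'
            have hE' : (Ebound q (t+1) : ℤ) = (q : ℤ) ^ (2*t+1) * (Ebound q t : ℤ) + 1 := by
              rw [Ebound_def1]; push_cast; ring
            rcases le_or_gt j (2*t+1) with hjle | hjgt
            · -- small j: use e1 ≥ t*n - q^j * E_t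
              have h1 : (t : ℤ) * n - ((q^j : ℕ) : ℤ) * (Ebound q t) ≤ (e1 : ℤ) := by
                rw [he1]
                exact le_trans le_sup_left (Int.self_le_toNat _)
              have h2 : ((q^j : ℕ) : ℤ) ≤ ((q^(2*t+1) : ℕ) : ℤ) := by
                exact_mod_cast Nat.pow_le_pow_right (by omega) hjle
              have h3 : ((q^j : ℕ) : ℤ) * (Ebound q t) ≤ ((q^(2*t+1) : ℕ) : ℤ) * (Ebound q t) :=
                mul_le_mul_of_nonneg_right h2 (by positivity)
              have hj1 : (1 : ℤ) ≤ (j : ℤ) := by exact_mod_cast (by omega : 1 ≤ j)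
              have hn1 : (1 : ℤ) ≤ (n : ℤ) := by exact_mod_cast hn
              have h4 : (n:ℤ) - 1 ≤ (j:ℤ) * ((n:ℤ) - 1) := le_mul_of_one_le_left (by linarith) hj1
              have hE'' : (Ebound q (t+1) : ℤ) = ((q^(2*t+1) : ℕ) : ℤ) * (Ebound q t : ℤ) + 1 := by
                rw [Ebound_def1]; push_cast; ring
              push_cast at h1 h3 hE'' ⊢
              linarith [h1, h3, h4]
            · -- big j : use e1 ≥ n - q^j
              have h3 : (2*(t:ℤ)+2) ≤ (j : ℤ) := by exact_mod_cast (by omega : 2*t+2 ≤ j)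
              have hn2' : (2 : ℤ) ≤ (n : ℤ) := by exact_mod_cast hn2
              have hEpos : (0 : ℤ) ≤ (Ebound q (t+1) : ℤ) := by positivity
              have he1pos : (0 : ℤ) ≤ (e1 : ℤ) := by positivity
              have h4 : (2*(t:ℤ)+2) * ((n:ℤ)-1) ≤ (j:ℤ) * ((n:ℤ)-1) :=
                mul_le_mul_of_nonneg_right h3 (by linarith)
              have h5 : (0:ℤ) ≤ ((t:ℤ)+1) * ((n:ℤ)-2) := mul_nonneg (by linarith) (by linarith)
              have h6 : (2*(t:ℤ)+2) * ((n:ℤ)-1) = ((t:ℤ)+1)*(n:ℤ) + ((t:ℤ)+1)*((n:ℤ)-2) := by ring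
              push_cast
              linarith [h4, h5]
          · -- branch n - 1
            have hj1 : (1 : ℤ) ≤ (j : ℤ) := by exact_mod_cast (by omega : 1 ≤ j)
            have hn1 : (1 : ℤ) ≤ (n : ℤ) := by exact_mod_cast hn
            have he1pos : (0 : ℤ) ≤ (e1 : ℤ) := by positivity
            have h4 : (n:ℤ) - 1 ≤ (j:ℤ) * ((n:ℤ) - 1) := le_mul_of_one_le_left (by linarith) hj1
            push_cast
            linarith [h4, he1pos]
        calc (p : ℤ) ^ X.toNat ∣ (p : ℤ) ^ (j * (n-1) + e1) := pow_dvd_pow _ hexp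
          _ = (p : ℤ) ^ (j * (n-1)) * (p : ℤ) ^ e1 := pow_add _ _ _
          _ ∣ _ := mul_dvd_mul dvd_rfl hA

lemma coeff_dvd' {p q : ℕ} {Ψ : PowerSeries ℤ} (hp2 : 2 ≤ p) (hq2 : 2 ≤ q)
    (hΨ : IsPsi p q Ψ) :
    ∀ t n : ℕ, (p : ℤ) ^ (((t : ℤ) * n - Ebound q t) ⊔ ((n : ℤ) - 1)).toNat ∣
      PowerSeries.coeff (R := ℤ) n Ψ :=
  coeff_dvd hp2 hq2 hΨ.1 (key_identity hp2 hΨ)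

lemma coeffN_dvd' {p q : ℕ} {Ψ : PowerSeries ℤ} (hp2 : 2 ≤ p) (hq2 : 2 ≤ q)
    (hΨ : IsPsi p q Ψ) :
    ∀ (t N : ℕ), 1 ≤ N → ∀ n : ℕ,
      (p : ℤ) ^ (((t : ℤ) * n - (N : ℤ) * Ebound q t) ⊔ ((n : ℤ) - N)).toNat ∣
        PowerSeries.coeff (R := ℤ) n (Ψ ^ N) :=
  fun t N hN n => coeff_pow_dvd hΨ.1 t (Ebound q t) N hN n (fun m _ => coeff_dvd' hp2 hq2 hΨ t m)

end PsiAux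

section
variable {p : ℕ} {K : Type} [NormedField K]

lemma norm_int_dvd_le (hna : IsUltrametricDist K) (hpK : ‖(p : K)‖ = (p : ℝ)⁻¹)
    (z : ℤ) (e : ℕ) (hdvd : (p : ℤ) ^ e ∣ z) : ‖((z : ℤ) : K)‖ ≤ ((p : ℝ) ^ e)⁻¹ := by
  haveI := hna
  obtain ⟨w, rfl⟩ := hdvd
  push_cast
  rw [norm_mul, norm_pow, hpK]
  calc ((p:ℝ)⁻¹) ^ e * ‖((w : ℤ) : K)‖ ≤ ((p:ℝ)⁻¹) ^ e * 1 := by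
        apply mul_le_mul_of_nonneg_left (IsUltrametricDist.norm_intCast_le_one K w)
        positivity
    _ = ((p : ℝ) ^ e)⁻¹ := by rw [mul_one, inv_pow]

lemma frob_step (hp : p.Prime) (hna : IsUltrametricDist K) (hpK : ‖(p : K)‖ = (p : ℝ)⁻¹)
    (u v : K) (hu : ‖u‖ ≤ 1) (hv : ‖v‖ ≤ 1) (hd : ‖u - v‖ ≤ (p : ℝ)⁻¹) :
    ‖u ^ p - v ^ p‖ ≤ (p : ℝ)⁻¹ * ‖u - v‖ := by
  haveI := hna
  have hp2 : 2 ≤ p := hp.two_le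
  have hpR : (1:ℝ) ≤ (p:ℝ)⁻¹⁻¹ := by
    rw [inv_inv]; exact_mod_cast hp.one_lt.le
  have hpinv : (p : ℝ)⁻¹ ≤ 1 := by
    rw [inv_le_one_iff₀]
    right; exact_mod_cast hp.one_lt.le
  have hexp : u ^ p = ∑ i ∈ Finset.range (p + 1), v ^ i * (u - v) ^ (p - i) * (p.choose i : K) := by
    have := add_pow v (u - v) p
    rw [add_sub_cancel] at this
    exact this
  have hsplit : u ^ p - v ^ p
      = ∑ i ∈ Finset.range p, v ^ i * (u - v) ^ (p - i) * (p.choose i : K) := by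
    rw [hexp, Finset.sum_range_succ]
    simp
  rw [hsplit]
  apply IsUltrametricDist.norm_sum_le_of_forall_le_of_nonneg
  · positivity
  · intro i hi
    rw [Finset.mem_range] at hi
    rcases Nat.eq_zero_or_pos i with rfl | hipos
    · -- i = 0 : term is (u-v)^p
      simp only [pow_zero, one_mul, Nat.choose_zero_right, Nat.cast_one, mul_one, Nat.sub_zero]
      have h1 : ‖(u - v) ^ p‖ = ‖u - v‖ ^ p := norm_pow _ _
      rw [h1]
      have hpos : ‖u - v‖ ^ p = ‖u - v‖ ^ (p - 1) * ‖u - v‖ := by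
        rw [← pow_succ]
        congr 1
        omega
      rw [hpos]
      apply mul_le_mul_of_nonneg_right _ (norm_nonneg _)
      calc ‖u - v‖ ^ (p - 1) ≤ ((p:ℝ)⁻¹) ^ (p - 1) :=
            pow_le_pow_left₀ (norm_nonneg _) hd _
        _ ≤ ((p:ℝ)⁻¹) ^ 1 := pow_le_pow_of_le_one (by positivity) hpinv (by omega)
        _ = (p:ℝ)⁻¹ := pow_one _
    · -- 1 ≤ i < p : binomial coefficient divisible by p
      have hdvd : (p : ℤ) ∣ (p.choose i : ℤ) := by
        exact_mod_cast Int.natCast_dvd_natCast.mpr (hp.dvd_choose_self (by omega) hi)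
      have hnorm_choose : ‖((p.choose i : ℕ) : K)‖ ≤ (p : ℝ)⁻¹ := by
        have := norm_int_dvd_le (p := p) hna hpK (p.choose i : ℤ) 1 (by simpa using hdvd)
        simpa using this
      calc ‖v ^ i * (u - v) ^ (p - i) * (p.choose i : K)‖
          = ‖v‖ ^ i * ‖u - v‖ ^ (p - i) * ‖((p.choose i : ℕ) : K)‖ := by
            rw [norm_mul, norm_mul, norm_pow, norm_pow]
        _ ≤ 1 * ‖u - v‖ ^ (p - i) * (p:ℝ)⁻¹ := by
            apply mul_le_mul (mul_le_mul (pow_le_one₀ (norm_nonneg _) hv) le_rfl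
              (by positivity) zero_le_one) hnorm_choose (norm_nonneg _) (by positivity)
        _ ≤ 1 * ‖u - v‖ ^ 1 * (p:ℝ)⁻¹ := by
            apply mul_le_mul_of_nonneg_right _ (by positivity)
            apply mul_le_mul_of_nonneg_left _ (by norm_num)
            apply pow_le_pow_of_le_one (norm_nonneg _) _ (by omega)
            exact le_trans hd hpinv
        _ = (p:ℝ)⁻¹ * ‖u - v‖ := by ring

lemma frob_pow (hp : p.Prime) (hna : IsUltrametricDist K) (hpK : ‖(p : K)‖ = (p : ℝ)⁻¹)
    {f : ℕ} (hf : 0 < f) (u v : K) (hu : ‖u‖ ≤ 1) (hv : ‖v‖ ≤ 1)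
    (hd : ‖u - v‖ ≤ (p : ℝ)⁻¹) :
    ‖u ^ (p ^ f) - v ^ (p ^ f)‖ ≤ (p : ℝ)⁻¹ * ‖u - v‖ := by
  induction f with
  | zero => omega
  | succ f ih =>
    have hpinv : (p : ℝ)⁻¹ ≤ 1 := by
      rw [inv_le_one_iff₀]; right; exact_mod_cast hp.one_lt.le
    rcases Nat.eq_zero_or_pos f with rfl | hfpos
    · simpa using frob_step hp hna hpK u v hu hv hd
    · have h1 := ih hfpos
      have h2 : ‖u ^ (p ^ f)‖ ≤ 1 := by
        rw [norm_pow]; exact pow_le_one₀ (norm_nonneg _) hu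
      have h3 : ‖v ^ (p ^ f)‖ ≤ 1 := by
        rw [norm_pow]; exact pow_le_one₀ (norm_nonneg _) hv
      have h4 : ‖u ^ (p ^ f) - v ^ (p ^ f)‖ ≤ (p:ℝ)⁻¹ := by
        refine h1.trans ?_
        calc (p:ℝ)⁻¹ * ‖u - v‖ ≤ (p:ℝ)⁻¹ * 1 := by
              apply mul_le_mul_of_nonneg_left (le_trans hd hpinv) (by positivity)
          _ = (p:ℝ)⁻¹ := mul_one _
      have h5 := frob_step hp hna hpK (u ^ (p ^ f)) (v ^ (p ^ f)) h2 h3 h4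
      rw [← pow_mul, ← pow_mul, ← pow_succ] at h5
      refine h5.trans ?_
      calc (p:ℝ)⁻¹ * ‖u ^ p ^ f - v ^ p ^ f‖ ≤ (p:ℝ)⁻¹ * ((p:ℝ)⁻¹ * ‖u - v‖) := by
            apply mul_le_mul_of_nonneg_left h1 (by positivity)
        _ ≤ 1 * ((p:ℝ)⁻¹ * ‖u - v‖) := by
            apply mul_le_mul_of_nonneg_right hpinv (by positivity)
        _ = (p:ℝ)⁻¹ * ‖u - v‖ := one_mul _

lemma frob_iter {q f : ℕ} (hp : p.Prime) (hna : IsUltrametricDist K)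
    (hpK : ‖(p : K)‖ = (p : ℝ)⁻¹) (hf : 0 < f) (hq : q = p ^ f)
    (hres : ∀ x : K, ‖x‖ ≤ 1 → ‖x ^ q - x‖ ≤ (p : ℝ)⁻¹)
    (y : K) (hy : ‖y‖ ≤ 1) :
    ∀ k : ℕ, ‖y ^ (q ^ (k + 1)) - y ^ (q ^ k)‖ ≤ ((p : ℝ) ^ (k + 1))⁻¹ := by
  have hpinv : (p : ℝ)⁻¹ ≤ 1 := by
    rw [inv_le_one_iff₀]; right; exact_mod_cast hp.one_lt.le
  intro k
  induction k with
  | zero => simpa using hres y hy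
  | succ k ih =>
    have h2 : ‖y ^ (q ^ (k+1))‖ ≤ 1 := by
      rw [norm_pow]; exact pow_le_one₀ (norm_nonneg _) hy
    have h3 : ‖y ^ (q ^ k)‖ ≤ 1 := by
      rw [norm_pow]; exact pow_le_one₀ (norm_nonneg _) hy
    have h4 : ‖y ^ (q ^ (k+1)) - y ^ (q ^ k)‖ ≤ (p:ℝ)⁻¹ := by
      refine ih.trans ?_
      rw [← inv_pow]
      calc ((p:ℝ)⁻¹) ^ (k+1) ≤ ((p:ℝ)⁻¹) ^ 1 :=
            pow_le_pow_of_le_one (by positivity) hpinv (by omega)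
        _ = (p:ℝ)⁻¹ := pow_one _
    have h5 := frob_pow hp hna hpK hf (y ^ (q ^ (k+1))) (y ^ (q ^ k)) h2 h3 h4
    rw [← hq, ← pow_mul, ← pow_mul] at h5
    have e1 : q ^ (k+1) * q = q ^ (k+1+1) := (pow_succ q (k+1)).symm
    have e2 : q ^ k * q = q ^ (k+1) := (pow_succ q k).symm
    rw [e1, e2] at h5
    refine h5.trans ?_
    have e3 : ((p:ℝ) ^ (k+1+1))⁻¹ = (p:ℝ)⁻¹ * ((p:ℝ) ^ (k+1))⁻¹ := by
      rw [pow_succ, mul_inv, mul_comm]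
    rw [e3]
    exact mul_le_mul_of_nonneg_left ih (by positivity)
end

/-- Evaluation of the entire function defined by an integral power series at a point of a
complete nonarchimedean field. -/
noncomputable def psiEval (Ψ : PowerSeries ℤ) {K : Type} [NormedField K] (x : K) : K :=
  ∑' i : ℕ, ((PowerSeries.coeff (R := ℤ) i Ψ : ℤ) : K) * x ^ i


section MainAnalytic
variable {p q : ℕ} {Ψ : PowerSeries ℤ} {K : Type} [NormedField K]
lemma coeffN_term_le (hp : p.Prime) (hq2 : 2 ≤ q) (hΨ : IsPsi p q Ψ) (hna : IsUltrametricDist K)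
    (hpK : ‖(p : K)‖ = (p : ℝ)⁻¹)
    (m N n : ℕ) (hN : 1 ≤ N) (x : K) (hx : ‖x‖ ≤ (p:ℝ)^m) :
    ‖((PowerSeries.coeff (R := ℤ) n (Ψ^N) : ℤ) : K) * x^n‖
      ≤ (p:ℝ)^(N * PsiAux.Ebound q (m+1)) * ((p:ℝ)⁻¹)^n := by
  have hp1 : (1:ℝ) < (p:ℝ) := by exact_mod_cast hp.one_lt
  set E := PsiAux.Ebound q (m+1) with hE
  set e := (((((m+1:ℕ)) : ℤ) * n - (N : ℤ) * E) ⊔ ((n : ℤ) - N)).toNat with he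
  have hdvd := PsiAux.coeffN_dvd' hp.two_le hq2 hΨ (m+1) N hN n
  have hnorm : ‖((PowerSeries.coeff (R := ℤ) n (Ψ^N) : ℤ) : K)‖ ≤ ((p:ℝ)^e)⁻¹ :=
    norm_int_dvd_le hna hpK _ _ hdvd
  have hxn : ‖x^n‖ ≤ (p:ℝ)^(m*n) := by
    rw [norm_pow, pow_mul]
    exact pow_le_pow_left₀ (norm_nonneg _) hx _
  have hkey : (m+1) * n ≤ N * E + e := by
    have h1 : (((m+1:ℕ)) : ℤ) * n - (N : ℤ) * E ≤ (e : ℤ) :=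
      le_trans le_sup_left (Int.self_le_toNat _)
    push_cast at h1
    omega
  calc ‖((PowerSeries.coeff (R := ℤ) n (Ψ^N) : ℤ) : K) * x^n‖
      ≤ ((p:ℝ)^e)⁻¹ * (p:ℝ)^(m*n) := by
        rw [norm_mul]
        exact mul_le_mul hnorm hxn (norm_nonneg _) (by positivity)
    _ ≤ (p:ℝ)^(N * E) * ((p:ℝ)⁻¹)^n := by
        have e1 : ((p:ℝ)^e)⁻¹ * (p:ℝ)^(m*n) = (p:ℝ)^(m*n) / (p:ℝ)^e := by ring
        have e2 : (p:ℝ)^(N * E) * ((p:ℝ)⁻¹)^n = (p:ℝ)^(N*E) / (p:ℝ)^n := by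
          rw [inv_pow]; ring
        rw [e1, e2, div_le_div_iff₀ (by positivity) (by positivity), ← pow_add, ← pow_add]
        apply pow_le_pow_right₀ hp1.le
        have e3 : (m+1)*n = m*n+n := by ring
        omega


lemma exists_m (hp : p.Prime) (x : K) : ∃ m : ℕ, ‖x‖ ≤ (p:ℝ)^m := by
  have hp1 : (1:ℝ) < (p:ℝ) := by exact_mod_cast hp.one_lt
  obtain ⟨m, hm⟩ := pow_unbounded_of_one_lt ‖x‖ hp1
  exact ⟨m, hm.le⟩

lemma summable_norm_coeffN (hp : p.Prime) (hq2 : 2 ≤ q) (hΨ : IsPsi p q Ψ) (hna : IsUltrametricDist K)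
    (hpK : ‖(p : K)‖ = (p : ℝ)⁻¹) (N : ℕ) (hN : 1 ≤ N) (x : K) :
    Summable (fun n : ℕ => ‖((PowerSeries.coeff (R := ℤ) n (Ψ^N) : ℤ) : K) * x^n‖) := by
  obtain ⟨m, hm⟩ := exists_m hp x
  have hp1 : (1:ℝ) < (p:ℝ) := by exact_mod_cast hp.one_lt
  have hgeom : Summable (fun n : ℕ => (p:ℝ)^(N * PsiAux.Ebound q (m+1)) * ((p:ℝ)⁻¹)^n) := by
    apply Summable.mul_left
    apply summable_geometric_of_lt_one (by positivity)
    rw [inv_lt_one_iff₀]; right; exact hp1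
  exact Summable.of_nonneg_of_le (fun n => norm_nonneg _)
    (fun n => coeffN_term_le hp hq2 hΨ hna hpK m N n hN x hm) hgeom

lemma summable_coeffN [CompleteSpace K] (hp : p.Prime) (hq2 : 2 ≤ q) (hΨ : IsPsi p q Ψ)
    (hna : IsUltrametricDist K) (hpK : ‖(p : K)‖ = (p : ℝ)⁻¹) (N : ℕ) (hN : 1 ≤ N) (x : K) :
    Summable (fun n : ℕ => ((PowerSeries.coeff (R := ℤ) n (Ψ^N) : ℤ) : K) * x^n) :=
  (summable_norm_coeffN hp hq2 hΨ hna hpK N hN x).of_norm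

lemma pow_eval [CompleteSpace K] (hp : p.Prime) (hq2 : 2 ≤ q) (hΨ : IsPsi p q Ψ)
    (hna : IsUltrametricDist K) (hpK : ‖(p : K)‖ = (p : ℝ)⁻¹) :
    ∀ N, 1 ≤ N → ∀ x : K,
      (psiEval Ψ x)^N = ∑' n : ℕ, ((PowerSeries.coeff (R := ℤ) n (Ψ^N) : ℤ) : K) * x^n := by
  intro N
  induction N with
  | zero => omega
  | succ N ih =>
    intro _ x
    rcases Nat.eq_zero_or_pos N with rfl | hN
    · simp [psiEval]
    · rw [pow_succ, ih hN x, psiEval,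
        tsum_mul_tsum_eq_tsum_sum_antidiagonal_of_summable_norm
          (summable_norm_coeffN hp hq2 hΨ hna hpK N hN x)
          (by simpa using summable_norm_coeffN (Ψ := Ψ) hp hq2 hΨ hna hpK 1 le_rfl x)]
      apply tsum_congr
      intro n
      rw [pow_succ Ψ, PowerSeries.coeff_mul]
      push_cast
      rw [Finset.sum_mul]
      apply Finset.sum_congr rfl
      rintro ⟨i, j⟩ hij
      rw [Finset.HasAntidiagonal.mem_antidiagonal] at hij
      simp only
      rw [← hij, pow_add]
      ring


lemma Dsummable_aux [CompleteSpace K] (hp : p.Prime) (hq2 : 2 ≤ q) (hΨ : IsPsi p q Ψ)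
    (hna : IsUltrametricDist K) (hpK : ‖(p : K)‖ = (p : ℝ)⁻¹) (k : ℕ) (x : K) :
    Summable (fun n : ℕ =>
      (((if n = 0 then 0 else (p:ℤ)^(k*(n-1)) * PowerSeries.coeff (R := ℤ) n (Ψ^(q^k))) : ℤ) : K) * x^n)
    ∧ ∀ n : ℕ,
      ‖(((if n = 0 then 0 else (p:ℤ)^(k*(n-1)) * PowerSeries.coeff (R := ℤ) n (Ψ^(q^k))) : ℤ) : K) * x^n‖
        ≤ ‖((PowerSeries.coeff (R := ℤ) n (Ψ^(q^k)) : ℤ) : K) * x^n‖ := by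
  haveI := hna
  have hbnd : ∀ n : ℕ,
      ‖(((if n = 0 then 0 else (p:ℤ)^(k*(n-1)) * PowerSeries.coeff (R := ℤ) n (Ψ^(q^k))) : ℤ) : K) * x^n‖
        ≤ ‖((PowerSeries.coeff (R := ℤ) n (Ψ^(q^k)) : ℤ) : K) * x^n‖ := by
    intro n
    rcases Nat.eq_zero_or_pos n with rfl | hn
    · simp
    · rw [if_neg (by omega)]
      push_cast
      rw [mul_assoc, norm_mul]
      calc ‖((p:K)^(k*(n-1)))‖ * ‖((PowerSeries.coeff (R := ℤ) n (Ψ^(q^k)) : ℤ) : K) * x^n‖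
          ≤ 1 * ‖((PowerSeries.coeff (R := ℤ) n (Ψ^(q^k)) : ℤ) : K) * x^n‖ := by
            apply mul_le_mul_of_nonneg_right _ (norm_nonneg _)
            have := IsUltrametricDist.norm_intCast_le_one K ((p:ℤ)^(k*(n-1)))
            push_cast at this
            exact this
        _ = _ := one_mul _
  constructor
  · apply Summable.of_norm
    apply Summable.of_nonneg_of_le (fun n => norm_nonneg _) hbnd
    exact summable_norm_coeffN hp hq2 hΨ hna hpK (q^k) (Nat.one_le_pow _ _ (by omega)) x
  · exact hbnd

lemma trunc_identity [CompleteSpace K] (hp : p.Prime) (hq2 : 2 ≤ q) (hΨ : IsPsi p q Ψ)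
    (hna : IsUltrametricDist K) (hpK : ‖(p : K)‖ = (p : ℝ)⁻¹)
    (x : K) (m : ℕ) (hx : ‖x‖ ≤ (p:ℝ)^m) (K' : ℕ)
    (hK' : PsiAux.Ebound q (m+2) + m + 2 ≤ K') :
    ‖(∑ k ∈ Finset.range (K'+1), ((p:K)^k)⁻¹ * (psiEval Ψ ((p:K)^k * x))^(q^k)) - x‖
      ≤ (p:ℝ)^(K') * ((p:ℝ)^(q^(K'+1)))⁻¹ := by
  haveI := hna
  have hp2 : 2 ≤ p := hp.two_le
  have hp1 : (1:ℝ) < (p:ℝ) := by exact_mod_cast hp.one_lt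
  have hpK0 : (p:K) ≠ 0 := by
    have h1 : (0:ℝ) < ‖(p:K)‖ := by rw [hpK]; positivity
    exact norm_pos_iff.mp h1
  set D : ℕ → ℕ → ℤ :=
    fun k n => if n = 0 then 0 else (p:ℤ)^(k*(n-1)) * PowerSeries.coeff (R := ℤ) n (Ψ^(q^k)) with hD
  -- Step A
  have hterm : ∀ k, ((p:K)^k)⁻¹ * (psiEval Ψ ((p:K)^k * x))^(q^k)
      = ∑' n : ℕ, ((D k n : ℤ) : K) * x^n := by
    intro k
    rw [pow_eval hp hq2 hΨ hna hpK (q^k) (Nat.one_le_pow _ _ (by omega)) ((p:K)^k * x),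
      ← tsum_mul_left]
    apply tsum_congr
    intro n
    rcases Nat.eq_zero_or_pos n with rfl | hn
    · simp [hD, PsiAux.coeff_pow_eq_zero hΨ.1 (q^k) (Nat.one_le_pow _ _ (by omega)) 0
        (pow_pos (by omega : 0 < q) k)]
    · obtain ⟨n', rfl⟩ : ∃ n', n = n' + 1 := ⟨n - 1, by omega⟩
      simp only [hD, if_neg (Nat.succ_ne_zero n'), Nat.add_sub_cancel]
      rw [mul_pow]
      have h1 : ((p:K)^k)^(n'+1) = (p:K)^(k*n') * (p:K)^k := by ring
      push_cast
      rw [h1]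
      field_simp
  -- Step B
  have hsummD : ∀ k, Summable (fun n : ℕ => ((D k n : ℤ) : K) * x^n) := by
    intro k
    exact (Dsummable_aux hp hq2 hΨ hna hpK k x).1
  have hsum : (∑ k ∈ Finset.range (K'+1), ((p:K)^k)⁻¹ * (psiEval Ψ ((p:K)^k * x))^(q^k))
      = ∑' n : ℕ, ((∑ k ∈ Finset.range (K'+1), D k n : ℤ) : K) * x^n := by
    rw [Finset.sum_congr rfl (fun k _ => hterm k), ← Summable.tsum_finsetSum (fun k _ => hsummD k)]
    apply tsum_congr
    intro n
    push_cast
    rw [Finset.sum_mul]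
  -- Step C
  have hxsum : x = ∑' n : ℕ, (((if n = 1 then 1 else 0 : ℤ)) : K) * x^n := by
    rw [tsum_eq_single 1 (by intro n hn; simp [hn])]
    simp
  -- summability of pieces
  have hs1 : Summable (fun n : ℕ => ((∑ k ∈ Finset.range (K'+1), D k n : ℤ) : K) * x^n) := by
    have : (fun n : ℕ => ((∑ k ∈ Finset.range (K'+1), D k n : ℤ) : K) * x^n)
        = fun n : ℕ => ∑ k ∈ Finset.range (K'+1), ((D k n : ℤ) : K) * x^n := by
      funext n
      push_cast
      rw [Finset.sum_mul]
    rw [this]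
    exact summable_sum (fun k _ => hsummD k)
  have hs2 : Summable (fun n : ℕ => (((if n = 1 then 1 else 0 : ℤ)) : K) * x^n) := by
    apply summable_of_ne_finset_zero (s := {1})
    intro n hn
    simp only [Finset.mem_singleton] at hn
    simp [hn]
  -- Step D
  set e : ℕ → ℤ := fun n => (∑ k ∈ Finset.range (K'+1), D k n) - (if n = 1 then 1 else 0) with he
  have hdiff : (∑ k ∈ Finset.range (K'+1), ((p:K)^k)⁻¹ * (psiEval Ψ ((p:K)^k * x))^(q^k)) - x
      = ∑' n : ℕ, ((e n : ℤ) : K) * x^n := by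
    have hse : Summable (fun n : ℕ => ((e n : ℤ) : K) * x^n) := by
      have hfeq : (fun n : ℕ => ((e n : ℤ) : K) * x^n)
          = fun n : ℕ => ((∑ k ∈ Finset.range (K'+1), D k n : ℤ) : K) * x^n
            - (((if n = 1 then 1 else 0 : ℤ)) : K) * x^n := by
        funext n
        simp only [he]
        push_cast
        ring
      rw [hfeq]
      exact hs1.sub hs2
    rw [hsum, sub_eq_iff_eq_add]
    calc ∑' n : ℕ, ((∑ k ∈ Finset.range (K'+1), D k n : ℤ) : K) * x^n
        = ∑' n : ℕ, (((e n : ℤ) : K) * x^n + (((if n = 1 then 1 else 0 : ℤ)) : K) * x^n) := by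
          apply tsum_congr
          intro n
          simp only [he]
          push_cast
          ring
      _ = (∑' n : ℕ, ((e n : ℤ) : K) * x^n)
            + ∑' n : ℕ, (((if n = 1 then 1 else 0 : ℤ)) : K) * x^n :=
          (hse.hasSum.add hs2.hasSum).tsum_eq
      _ = (∑' n : ℕ, ((e n : ℤ) : K) * x^n) + x := by rw [← hxsum]
  -- Step E : vanishing of small coefficients
  have hDeq0 : ∀ j n, n < q^j → D j n = 0 := by
    intro j n hj
    rcases Nat.eq_zero_or_pos n with rfl | hn
    · simp [hD]
    · simp only [hD, if_neg (by omega : ¬ n = 0)]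
      rw [PsiAux.coeff_pow_eq_zero hΨ.1 (q^j) (Nat.one_le_pow _ _ (by omega)) n hj, mul_zero]
  have hvan : ∀ n, n < q^(K'+1) → e n = 0 := by
    intro n hn
    rcases Nat.eq_zero_or_pos n with rfl | hn1
    · simp [he, hD]
    · have h2 : ∑ k ∈ Finset.range (K'+1), D k n = ∑ j ∈ Finset.range (n+1), D j n := by
        have e1 : ∑ k ∈ Finset.range (K'+1), D k n
            = ∑ k ∈ Finset.range (max K' n + 1), D k n := by
          apply Finset.sum_subset (Finset.range_subset_range.mpr
            (Nat.succ_le_succ (le_max_left K' n)))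
          intro j _ hj
          rw [Finset.mem_range] at hj
          apply hDeq0
          have : q^(K'+1) ≤ q^j := Nat.pow_le_pow_right (by omega) (by omega)
          omega
        have e2 : ∑ k ∈ Finset.range (n+1), D k n
            = ∑ k ∈ Finset.range (max K' n + 1), D k n := by
          apply Finset.sum_subset (Finset.range_subset_range.mpr
            (Nat.succ_le_succ (le_max_right K' n)))
          intro j _ hj
          rw [Finset.mem_range] at hj
          apply hDeq0
          have h3 : j < 2^j := (Nat.lt_two_pow_self (n := j))
          have h4 : 2^j ≤ q^j := Nat.pow_le_pow_left hq2 j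
          omega
        rw [e1, e2]
      have h3 : ∑ j ∈ Finset.range (n+1), D j n = if n = 1 then 1 else 0 := by
        rw [← PsiAux.key_identity hp.two_le hΨ n hn1]
        apply Finset.sum_congr rfl
        intro j _
        simp [hD, if_neg (by omega : ¬ n = 0)]
      simp only [he]
      rw [h2, h3, sub_self]
  -- Step F : bound for large coefficients
  have hbig : ∀ n, q^(K'+1) ≤ n →
      ‖((e n : ℤ) : K) * x^n‖ ≤ (p:ℝ)^(K') * ((p:ℝ)^(q^(K'+1)))⁻¹ := by
    intro n hn
    have hq1 : 2 ≤ q^(K'+1) := by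
      calc 2 = 2^1 := rfl
      _ ≤ 2^(K'+1) := Nat.pow_le_pow_right (by omega) (by omega)
      _ ≤ q^(K'+1) := Nat.pow_le_pow_left hq2 _
    have hn2 : 2 ≤ n := by omega
    have hδ : e n = ∑ k ∈ Finset.range (K'+1), D k n := by
      simp [he, if_neg (by omega : ¬ n = 1)]
    rw [hδ]
    have hcast : ((∑ k ∈ Finset.range (K'+1), D k n : ℤ) : K) * x^n
        = ∑ k ∈ Finset.range (K'+1), ((D k n : ℤ) : K) * x^n := by
      push_cast
      rw [Finset.sum_mul]
    rw [hcast]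
    apply IsUltrametricDist.norm_sum_le_of_forall_le_of_nonneg (by positivity)
    intro k hk
    rw [Finset.mem_range] at hk
    -- bound the single term
    set E := PsiAux.Ebound q (m+2) with hE
    have hEm : m + 2 ≤ E := PsiAux.Ebound_ge q hq2 (m+2)
    set e1 := (((((m+2:ℕ)) : ℤ) * n - ((q^k : ℕ) : ℤ) * E) ⊔ ((n : ℤ) - (q^k : ℕ))).toNat with he1
    have hdvdD : (p:ℤ)^(k*(n-1) + e1) ∣ D k n := by
      rw [hD]
      simp only [if_neg (by omega : ¬ n = 0)]
      rw [pow_add]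
      exact mul_dvd_mul dvd_rfl
        (PsiAux.coeffN_dvd' hp.two_le hq2 hΨ (m+2) (q^k) (Nat.one_le_pow _ _ (by omega)) n)
    have hnormD : ‖((D k n : ℤ) : K)‖ ≤ ((p:ℝ)^(k*(n-1) + e1))⁻¹ :=
      norm_int_dvd_le hna hpK _ _ hdvdD
    have hxn : ‖x^n‖ ≤ (p:ℝ)^(m*n) := by
      rw [norm_pow, pow_mul]
      exact pow_le_pow_left₀ (norm_nonneg _) hx _
    -- the key arithmetic inequality
    have hfinal : m*n + n ≤ K' + (k*(n-1) + e1) := by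
      obtain ⟨n', rfl⟩ : ∃ n', n = n' + 1 := ⟨n - 1, by omega⟩
      rcases le_or_gt ((q^k) * E) (n'+1) with hA | hB
      · -- case A
        have h1 : (((m+2:ℕ)) : ℤ) * (n'+1) - ((q^k : ℕ) : ℤ) * E ≤ (e1 : ℤ) :=
          le_trans le_sup_left (Int.self_le_toNat _)
        have h2 : (m+2) * (n'+1) ≤ e1 + (q^k) * E := by
          push_cast at h1
          omega
        have h3 : (m+2) * (n'+1) = m*(n'+1) + 2*(n'+1) := by ring
        omega
      · -- case B
        obtain ⟨s, hs⟩ : ∃ s, K' + 1 - k = s := ⟨_, rfl⟩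
        have hsk : k + s = K' + 1 := by omega
        have f1 : q^k * q^s = q^(K'+1) := by rw [← pow_add, hsk]
        have f3 : q^s < E := by
          have : q^k * q^s < q^k * E := by
            rw [f1]
            calc q^(K'+1) ≤ n'+1 := hn
            _ < q^k * E := hB
          exact Nat.lt_of_mul_lt_mul_left this
        have f4 : s < 2^s := (Nat.lt_two_pow_self (n := s))
        have f5 : 2^s ≤ q^s := Nat.pow_le_pow_left hq2 s
        have hk4 : m + 4 ≤ k := by omega
        have f6 : (m+4) * n' ≤ k * n' := Nat.mul_le_mul_right _ hk4
        have f7 : (m+4) * n' = m*n' + 4*n' := by ring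
        have f8 : m * (n'+1) = m*n' + m := by ring
        have f9 : K' + 2 ≤ 2^(K'+1) := by
          have := (Nat.lt_two_pow_self (n := K'+1))
          omega
        have f10 : 2^(K'+1) ≤ q^(K'+1) := Nat.pow_le_pow_left hq2 _
        have f11 : K' + 1 ≤ n' := by omega
        have : k * ((n'+1) - 1) = k * n' := by simp
        omega
    -- real inequality
    calc ‖((D k n : ℤ) : K) * x^n‖ ≤ ((p:ℝ)^(k*(n-1) + e1))⁻¹ * (p:ℝ)^(m*n) := by
          rw [norm_mul]
          exact mul_le_mul hnormD hxn (norm_nonneg _) (by positivity)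
      _ ≤ (p:ℝ)^(K') * ((p:ℝ)^n)⁻¹ := by
          have eA : ((p:ℝ)^(k*(n-1) + e1))⁻¹ * (p:ℝ)^(m*n)
              = (p:ℝ)^(m*n) / (p:ℝ)^(k*(n-1) + e1) := by ring
          have eB : (p:ℝ)^(K') * ((p:ℝ)^n)⁻¹ = (p:ℝ)^(K') / (p:ℝ)^n := by ring
          rw [eA, eB, div_le_div_iff₀ (by positivity) (by positivity), ← pow_add, ← pow_add]
          exact pow_le_pow_right₀ hp1.le (by omega)
      _ ≤ (p:ℝ)^(K') * ((p:ℝ)^(q^(K'+1)))⁻¹ := by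
          apply mul_le_mul_of_nonneg_left _ (by positivity)
          apply inv_anti₀ (by positivity)
          exact pow_le_pow_right₀ hp1.le hn
  -- conclude
  rw [hdiff]
  apply IsUltrametricDist.norm_tsum_le_of_forall_le_of_nonneg (by positivity)
  intro n
  rcases lt_or_ge n (q^(K'+1)) with hlt | hge
  · rw [hvan n hlt]
    simp only [Int.cast_zero, zero_mul, norm_zero]
    positivity
  · exact hbig n hge



lemma psi_norm_le (hna : IsUltrametricDist K) (hΨ : IsPsi p q Ψ) :
    ∀ y : K, ‖y‖ ≤ 1 → ‖psiEval Ψ y‖ ≤ ‖y‖ := by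
  haveI := hna
  intro y hy
  apply IsUltrametricDist.norm_tsum_le_of_forall_le_of_nonneg (norm_nonneg y)
  intro n
  rcases Nat.eq_zero_or_pos n with rfl | hn
  · have h0 : PowerSeries.coeff (R := ℤ) 0 Ψ = 0 := by
      simpa [PowerSeries.coeff_zero_eq_constantCoeff] using hΨ.1
    simp [h0]
  · rw [norm_mul, norm_pow]
    calc ‖((PowerSeries.coeff (R := ℤ) n Ψ : ℤ) : K)‖ * ‖y‖ ^ n ≤ 1 * ‖y‖ ^ n := by
          apply mul_le_mul_of_nonneg_right (IsUltrametricDist.norm_intCast_le_one K _)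
            (by positivity)
      _ = ‖y‖ ^ n := one_mul _
      _ ≤ ‖y‖ ^ 1 := pow_le_pow_of_le_one (norm_nonneg _) hy (by omega)
      _ = ‖y‖ := pow_one _

lemma norm_sub_le_max' (hna : IsUltrametricDist K) (a b : K) : ‖a - b‖ ≤ max ‖a‖ ‖b‖ := by
  haveI := hna
  rw [sub_eq_add_neg]
  simpa using IsUltrametricDist.norm_add_le_max a (-b)

lemma descent [CompleteSpace K] (hp : p.Prime) {f : ℕ} (hf : 0 < f) (hq : q = p ^ f)
    (hΨ : IsPsi p q Ψ) (hna : IsUltrametricDist K) (hpK : ‖(p : K)‖ = (p : ℝ)⁻¹)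
    (hres : ∀ x : K, ‖x‖ ≤ 1 → ‖x ^ q - x‖ ≤ (p : ℝ)⁻¹) :
    ∀ m : ℕ, ∀ x : K, ‖x‖ ≤ (p:ℝ)^m → ‖psiEval Ψ x‖ ≤ 1 := by
  haveI := hna
  have hq2 : 2 ≤ q := by
    rw [hq]
    calc 2 = 2^1 := rfl
    _ ≤ 2^f := Nat.pow_le_pow_right (by norm_num) hf
    _ ≤ p^f := Nat.pow_le_pow_left hp.two_le f
  have hp1 : (1:ℝ) < (p:ℝ) := by exact_mod_cast hp.one_lt
  have hpinv : (p:ℝ)⁻¹ ≤ 1 := by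
    rw [inv_le_one_iff₀]; right; exact hp1.le
  have hpK0 : (p:K) ≠ 0 := by
    have h1 : (0:ℝ) < ‖(p:K)‖ := by rw [hpK]; positivity
    exact norm_pos_iff.mp h1
  intro m
  induction m with
  | zero =>
    intro x hx
    exact (psi_norm_le hna hΨ x (by simpa using hx)).trans (by simpa using hx)
  | succ m ih =>
    intro x hx
    set K' := PsiAux.Ebound q (m+3) + m + 3 with hK'
    have hxp : ‖(p:K) * x‖ ≤ (p:ℝ)^(m+1) := by
      rw [norm_mul, hpK]
      calc (p:ℝ)⁻¹ * ‖x‖ ≤ 1 * ‖x‖ := mul_le_mul_of_nonneg_right hpinv (norm_nonneg _)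
      _ = ‖x‖ := one_mul _
      _ ≤ (p:ℝ)^(m+1) := hx
    have hKcond : PsiAux.Ebound q ((m+1)+2) + (m+1) + 2 ≤ K' := by
      show PsiAux.Ebound q (m+3) + (m+1) + 2 ≤ K'
      omega
    have hA := trunc_identity hp hq2 hΨ hna hpK x (m+1) hx K' hKcond
    have hB := trunc_identity hp hq2 hΨ hna hpK ((p:K)*x) (m+1) hxp K' hKcond
    set T : ℕ → K := fun k => ((p:K)^k)⁻¹ * (psiEval Ψ ((p:K)^k * x))^(q^k) with hT
    set V : ℕ → K := fun k => ((p:K)^(k+1))⁻¹ * (psiEval Ψ ((p:K)^(k+1) * x))^(q^k) with hV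
    have hBV : ∀ k, ((p:K)^k)⁻¹ * (psiEval Ψ ((p:K)^k * ((p:K)*x)))^(q^k) = (p:K) * V k := by
      intro k
      have e1 : (p:K)^k * ((p:K)*x) = (p:K)^(k+1) * x := by ring
      rw [e1]
      simp only [hV]
      field_simp
      ring
    set β := (p:ℝ)^(K') * ((p:ℝ)^(q^(K'+1)))⁻¹ with hβ
    have hA' : ‖(∑ k ∈ Finset.range (K'+1), T k) - x‖ ≤ β := hA
    have hB' : ‖(p:K) * (∑ k ∈ Finset.range (K'+1), V k) - (p:K) * x‖ ≤ β := by
      have h1 := hB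
      rw [Finset.sum_congr rfl (fun k _ => hBV k), ← Finset.mul_sum] at h1
      exact h1
    have hVx : ‖(∑ k ∈ Finset.range (K'+1), V k) - x‖ ≤ (p:ℝ) * β := by
      have e1 : (∑ k ∈ Finset.range (K'+1), V k) - x
          = (p:K)⁻¹ * ((p:K) * (∑ k ∈ Finset.range (K'+1), V k) - (p:K) * x) := by
        rw [mul_sub, inv_mul_cancel_left₀ hpK0, inv_mul_cancel_left₀ hpK0]
      rw [e1, norm_mul, norm_inv, hpK, inv_inv]
      exact mul_le_mul_of_nonneg_left hB' (by positivity)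
    have hT0 : T 0 = psiEval Ψ x := by simp [hT]
    have halg : psiEval Ψ x
        = (((∑ k ∈ Finset.range (K'+1), T k) - x)
          - ((∑ k ∈ Finset.range (K'+1), V k) - x)
          + (∑ k ∈ Finset.range K', (V k - T (k+1)))) + V K' := by
      have e1 : ∑ k ∈ Finset.range (K'+1), T k = (∑ k ∈ Finset.range K', T (k+1)) + T 0 :=
        Finset.sum_range_succ' T K'
      have e2 : ∑ k ∈ Finset.range (K'+1), V k = (∑ k ∈ Finset.range K', V k) + V K' :=
        Finset.sum_range_succ V K'
      have e3 : ∑ k ∈ Finset.range K', (V k - T (k+1))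
          = (∑ k ∈ Finset.range K', V k) - (∑ k ∈ Finset.range K', T (k+1)) :=
        Finset.sum_sub_distrib _ _
      rw [e1, e2, e3, hT0]
      ring
    have hq1 : K' + 1 ≤ q^(K'+1) := by
      have h3 : K'+1 < 2^(K'+1) := (Nat.lt_two_pow_self (n := K'+1))
      have h4 : 2^(K'+1) ≤ q^(K'+1) := Nat.pow_le_pow_left hq2 _
      omega
    have hβ1 : β ≤ 1 := by
      rw [hβ, ← div_eq_mul_inv, div_le_one (by positivity)]
      exact pow_le_pow_right₀ hp1.le (by omega)
    have hpβ1 : (p:ℝ) * β ≤ 1 := by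
      have e4 : (p:ℝ) * β = (p:ℝ)^(K'+1) * ((p:ℝ)^(q^(K'+1)))⁻¹ := by
        rw [hβ, pow_succ]
        ring
      rw [e4, ← div_eq_mul_inv, div_le_one (by positivity)]
      exact pow_le_pow_right₀ hp1.le hq1
    have hmid : ∀ k ∈ Finset.range K', ‖V k - T (k+1)‖ ≤ 1 := by
      intro k _
      have hyb : ‖(p:K)^(k+1) * x‖ ≤ (p:ℝ)^m := by
        rw [norm_mul, norm_pow, hpK]
        calc ((p:ℝ)⁻¹)^(k+1) * ‖x‖ ≤ ((p:ℝ)⁻¹)^1 * (p:ℝ)^(m+1) := by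
              apply mul_le_mul (pow_le_pow_of_le_one (by positivity) hpinv (by omega)) hx
                (norm_nonneg _) (by positivity)
          _ = (p:ℝ)^m := by
              rw [pow_one, pow_succ]
              field_simp
      have hy1 : ‖psiEval Ψ ((p:K)^(k+1) * x)‖ ≤ 1 := ih _ hyb
      have e4 : V k - T (k+1) = ((p:K)^(k+1))⁻¹ *
          ((psiEval Ψ ((p:K)^(k+1)*x))^(q^k) - (psiEval Ψ ((p:K)^(k+1)*x))^(q^(k+1))) := by
        simp only [hV, hT]
        ring
      rw [e4, norm_mul, norm_inv, norm_pow, hpK, inv_pow, inv_inv]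
      have h5 := frob_iter hp hna hpK hf hq hres _ hy1 k
      rw [norm_sub_rev] at h5
      calc (p:ℝ)^(k+1) * ‖(psiEval Ψ ((p:K)^(k+1)*x))^(q^k)
              - (psiEval Ψ ((p:K)^(k+1)*x))^(q^(k+1))‖
          ≤ (p:ℝ)^(k+1) * ((p:ℝ)^(k+1))⁻¹ := mul_le_mul_of_nonneg_left h5 (by positivity)
        _ = 1 := by field_simp
    have hsummid : ‖∑ k ∈ Finset.range K', (V k - T (k+1))‖ ≤ 1 :=
      IsUltrametricDist.norm_sum_le_of_forall_le_of_nonneg zero_le_one hmid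
    have hVK : ‖V K'‖ ≤ 1 := by
      have hyb : ‖(p:K)^(K'+1) * x‖ ≤ ((p:ℝ)^(K'-m))⁻¹ := by
        rw [norm_mul, norm_pow, hpK]
        have e5 : (p:ℝ)^(m+1) * (p:ℝ)^(K'-m) = (p:ℝ)^(K'+1) := by
          rw [← pow_add]
          congr 1
          omega
        calc ((p:ℝ)⁻¹)^(K'+1) * ‖x‖ ≤ ((p:ℝ)⁻¹)^(K'+1) * (p:ℝ)^(m+1) :=
              mul_le_mul_of_nonneg_left hx (by positivity)
          _ = ((p:ℝ)^(K'-m))⁻¹ := by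
              rw [inv_pow, ← e5]
              field_simp
      have hyb1 : ‖(p:K)^(K'+1)*x‖ ≤ 1 := by
        refine hyb.trans ?_
        rw [inv_le_one_iff₀]
        right
        exact one_le_pow₀ hp1.le
      have hS1 : ‖psiEval Ψ ((p:K)^(K'+1)*x)‖ ≤ ((p:ℝ)^(K'-m))⁻¹ :=
        (psi_norm_le hna hΨ _ hyb1).trans hyb
      have hVKeq : ‖V K'‖ = (p:ℝ)^(K'+1) * ‖psiEval Ψ ((p:K)^(K'+1)*x)‖^(q^(K')) := by
        simp only [hV]
        rw [norm_mul, norm_inv, norm_pow, norm_pow, hpK, inv_pow, inv_inv]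
      rw [hVKeq]
      calc (p:ℝ)^(K'+1) * ‖psiEval Ψ ((p:K)^(K'+1)*x)‖^(q^(K'))
          ≤ (p:ℝ)^(K'+1) * (((p:ℝ)^(K'-m))⁻¹)^(q^(K')) := by
            apply mul_le_mul_of_nonneg_left (pow_le_pow_left₀ (norm_nonneg _) hS1 _)
              (by positivity)
        _ = (p:ℝ)^(K'+1) * ((p:ℝ)^((K'-m) * q^(K')))⁻¹ := by
            rw [← inv_pow, ← pow_mul, inv_pow]
        _ ≤ 1 := by
            rw [← div_eq_mul_inv, div_le_one (by positivity)]
            apply pow_le_pow_right₀ hp1.le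
            have h6 : K' < 2^(K') := (Nat.lt_two_pow_self (n := K'))
            have h7 : 2^(K') ≤ q^(K') := Nat.pow_le_pow_left hq2 _
            have h8 : 1 ≤ K' - m := by omega
            have h9 : 1 * q^(K') ≤ (K'-m) * q^(K') := Nat.mul_le_mul_right _ h8
            omega
    rw [halg]
    refine le_trans (IsUltrametricDist.norm_add_le_max _ _) (max_le ?_ hVK)
    refine le_trans (IsUltrametricDist.norm_add_le_max _ _) (max_le ?_ hsummid)
    refine le_trans (norm_sub_le_max' hna _ _) (max_le (hA'.trans hβ1) (hVx.trans hpβ1))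

end MainAnalytic

/-- for every `a ∈ ℚ_q`, the value `Ψ_q(a)` lies in `ℤ_q`. Here `ℚ_q` is
modelled as a complete nonarchimedean normed field `K` with `‖p‖ = p⁻¹`, value group
`p^ℤ` (unramified) and residue field contained in `𝔽_q`; `ℤ_q` is the unit ball
`{x : ‖x‖ ≤ 1}`, and `Ψ_q(a)` is the (convergent, since `Ψ_q` is entire) sum of the
series. -/
theorem psi_maps_Qq_to_Zq (p f : ℕ) (hp : p.Prime) (hf : 0 < f) (q : ℕ) (hq : q = p ^ f)
    (Ψ : PowerSeries ℤ) (hΨ : IsPsi p q Ψ)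
    (K : Type) [NormedField K] [CompleteSpace K] (hna : IsUltrametricDist K)
    (hpK : ‖(p : K)‖ = (p : ℝ)⁻¹)
    (hdisc : ∀ x : K, x ≠ 0 → ∃ m : ℤ, ‖x‖ = (p : ℝ) ^ m)
    (hres : ∀ x : K, ‖x‖ ≤ 1 → ‖x ^ q - x‖ ≤ (p : ℝ)⁻¹)
    (a : K) :
    Summable (fun i : ℕ => ((PowerSeries.coeff (R := ℤ) i Ψ : ℤ) : K) * a ^ i) ∧
    ‖psiEval Ψ a‖ ≤ 1 := by
  have hq2 : 2 ≤ q := by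
    rw [hq]
    calc 2 = 2^1 := rfl
    _ ≤ 2^f := Nat.pow_le_pow_right (by norm_num) hf
    _ ≤ p^f := Nat.pow_le_pow_left hp.two_le f
  constructor
  · have h1 := summable_coeffN (Ψ := Ψ) hp hq2 hΨ hna hpK 1 le_rfl a
    simpa using h1
  · obtain ⟨m, hm⟩ := exists_m hp a
    exact descent hp hf hq hΨ hna hpK hres m a hm
end

section
/- For every j ≥ 0 and every x ∈ ℂ_p with v_p(x) > −j, one has v_p(p^{−j} Ψ_q(p^j x)^{q^j}) = −j + q^j (j + v_p(x)). In particular, for v_p(x) > 0, v_p(Ψ_q(x)) = v_p(x). -/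
open PowerSeries in
open PowerSeries

lemma psiEval_norm_eq {K : Type} [NormedField K] [CompleteSpace K] [IsUltrametricDist K]
    (Ψ : PowerSeries ℤ) (h0 : PowerSeries.constantCoeff (R := ℤ) Ψ = 0)
    (h1 : PowerSeries.coeff (R := ℤ) 1 Ψ = 1) (x : K) (hx : ‖x‖ < 1) :
    ‖(∑' i : ℕ, ((PowerSeries.coeff (R := ℤ) i Ψ : ℤ) : K) * x ^ i)‖ = ‖x‖ := by
  set a : ℕ → K := fun i => ((PowerSeries.coeff (R := ℤ) i Ψ : ℤ) : K) * x ^ i with ha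
  have hc : ∀ i, ‖((PowerSeries.coeff (R := ℤ) i Ψ : ℤ) : K)‖ ≤ 1 :=
    fun i => IsUltrametricDist.norm_intCast_le_one K _
  have hbd : ∀ i, ‖a i‖ ≤ ‖x‖ ^ i := by
    intro i
    rw [ha, norm_mul, norm_pow]
    exact mul_le_of_le_one_left (by positivity) (hc i)
  have hsum : Summable a :=
    Summable.of_norm_bounded (summable_geometric_of_lt_one (norm_nonneg x) hx) hbd
  have hsum1 : Summable (fun i => a (i + 1)) := by
    rw [summable_nat_add_iff]; exact hsum
  have hsum2 : Summable (fun i => a (i + 2)) := by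
    rw [summable_nat_add_iff]; exact hsum
  have hdec : (∑' i, a i) = x + ∑' i, a (i + 2) := by
    rw [Summable.tsum_eq_zero_add hsum, Summable.tsum_eq_zero_add hsum1]
    have e0 : a 0 = 0 := by
      simp [ha, PowerSeries.coeff_zero_eq_constantCoeff, h0]
    have e1 : a 1 = x := by simp [ha, h1]
    rw [e0, e1, zero_add]
  have hg : ‖∑' i, a (i + 2)‖ ≤ ‖x‖ ^ 2 := by
    refine le_of_tendsto' hsum2.hasSum.norm (fun s => IsUltrametricDist.norm_sum_le_of_forall_le_of_nonneg (by positivity) (fun i _ => ?_))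
    calc ‖a (i + 2)‖ ≤ ‖x‖ ^ (i + 2) := hbd _
    _ ≤ ‖x‖ ^ 2 := pow_le_pow_of_le_one (norm_nonneg x) hx.le (by omega)
  rw [hdec]
  rcases eq_or_ne x 0 with rfl | hx0
  · simp only [norm_zero, pow_two, zero_mul] at hg ⊢
    rw [zero_add, le_antisymm (hg.trans (by norm_num)) (norm_nonneg _)]
  · have hxpos : 0 < ‖x‖ := norm_pos_iff.mpr hx0
    have hlt : ‖∑' i, a (i + 2)‖ < ‖x‖ :=
      hg.trans_lt (by nlinarith)
    rw [IsUltrametricDist.norm_add_eq_max_of_norm_ne_norm (by exact hlt.ne'),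
      max_eq_left hlt.le]



open PowerSeries

/-- for every `j ≥ 0` and `x ∈ ℂ_p` with `v_p(x) > -j`,
`v_p(p^{-j} Ψ_q(p^j x)^{q^j}) = -j + q^j (j + v_p(x))`; in particular for `v_p(x) > 0`,
`v_p(Ψ_q(x)) = v_p(x)`. Here `ℂ_p` is modelled as a complete algebraically closed
nonarchimedean normed field `K` with `‖p‖ = p⁻¹`, and the valuation identities are
expressed multiplicatively: `v_p(x) > -j ↔ ‖x‖ < p^j`, and the conclusion reads
`‖p^{-j} Ψ_q(p^j x)^{q^j}‖ = p^{j - j·q^j} · ‖x‖^{q^j}`. -/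
theorem psi_valuation_formula (p f : ℕ) (hp : p.Prime) (hf : 0 < f)
    (q : ℕ) (hq : q = p ^ f)
    (Ψ : PowerSeries ℤ) (hΨ : IsPsi p q Ψ)
    (K : Type) [NormedField K] [CompleteSpace K] [IsAlgClosed K]
    (hna : IsUltrametricDist K) (hpK : ‖(p : K)‖ = (p : ℝ)⁻¹) :
    (∀ j : ℕ, ∀ x : K, ‖x‖ < (p : ℝ) ^ (j : ℤ) →
      ‖((p : K) ^ j)⁻¹ * (psiEval Ψ ((p : K) ^ j * x)) ^ q ^ j‖
        = (p : ℝ) ^ ((j : ℤ) - (j : ℤ) * (q ^ j : ℤ)) * ‖x‖ ^ (q ^ j)) ∧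
    (∀ x : K, ‖x‖ < 1 → ‖psiEval Ψ x‖ = ‖x‖) := by
  obtain ⟨h0, h1, -⟩ := hΨ
  have hppos : (0:ℝ) < p := by exact_mod_cast hp.pos
  have hkey : ∀ x : K, ‖x‖ < 1 → ‖psiEval Ψ x‖ = ‖x‖ := fun x hx =>
    psiEval_norm_eq Ψ h0 h1 x hx
  refine ⟨fun j x hx => ?_, hkey⟩
  have hq1 : 1 ≤ q ^ j := Nat.one_le_pow _ _ (by rw [hq]; exact pow_pos hp.pos f)
  have hnpj : ‖(p:K) ^ j‖ = ((p:ℝ) ^ j)⁻¹ := by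
    rw [norm_pow, hpK, inv_pow]
  have hy : ‖(p:K) ^ j * x‖ < 1 := by
    rw [norm_mul, hnpj]
    rw [show ((p:ℝ) ^ (j:ℤ)) = (p:ℝ) ^ j from zpow_natCast _ _] at hx
    rw [inv_mul_lt_iff₀ (by positivity), mul_one]
    exact hx
  have hΨy : ‖psiEval Ψ ((p:K) ^ j * x)‖ = ((p:ℝ) ^ j)⁻¹ * ‖x‖ := by
    rw [hkey _ hy, norm_mul, hnpj]
  rw [norm_mul, norm_inv, hnpj, inv_inv, norm_pow, hΨy, mul_pow]
  have hrw : (p:ℝ) ^ ((j:ℤ) - (j:ℤ) * (q ^ j : ℤ))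
      = (p:ℝ) ^ j * (((p:ℝ) ^ j)⁻¹) ^ (q ^ j) := by
    rw [zpow_sub₀ (ne_of_gt hppos), zpow_natCast, div_eq_mul_inv, inv_pow, ← pow_mul]
    congr 2
  rw [hrw]
  ring
end
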